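/- arXiv:1309.7235 — 4 statements merged into one kernel-verified Lean document; each statement's English description precedes it below -/
import Mathlib

section
/- Define K_n(x) = (x-1)^{-1}[J_{n+1}(x) - A_n J_n(x)] (Christoffel transform of the big -1 Jacobi polynomials). Then K_n is a monic polynomial of degree n and satisfies the recurrence x K_n(x) = K_{n+1}(x) + (1 - A_n - C_{n+1}) K_n(x) + A_n C_n K_{n-1}(x). -/
open Polynomial in
private lemma aux_monic_sub {p q : Polynomial ℝ} {n : ℕ} (r : ℝ)
    (hp : p.Monic) (hpd : p.natDegree = n + 1) (hq : q.natDegree ≤ n) :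
    (p - Polynomial.C r * q).Monic ∧ (p - Polynomial.C r * q).natDegree = n + 1 := by
  have hqd : (Polynomial.C r * q).natDegree < p.natDegree := by
    have := Polynomial.natDegree_C_mul_le r q
    omega
  have hdeg : (Polynomial.C r * q).degree < p.degree := Polynomial.degree_lt_degree hqd
  exact ⟨hp.sub_of_left hdeg, by rw [Polynomial.natDegree_sub_eq_left_of_natDegree_lt hqd, hpd]⟩

/-- the Christoffel transform `K_n(x) = (x-1)^{-1}[J_{n+1}(x) - A_n J_n(x)]`
of the big `-1` Jacobi polynomials is a monic polynomial of degree `n` and satisfies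
`x K_n = K_{n+1} + (1 - A_n - C_{n+1}) K_n + A_n C_n K_{n-1}`. -/
theorem bigMinusOneJacobi_christoffel
    (a b c : ℝ) (hc0 : 0 < c) (hc1 : c < 1)
    (hden : ∀ n : ℕ, 2*(n : ℝ) + a + b ≠ 0)
    (A Cs : ℕ → ℝ)
    (hAe : ∀ n : ℕ, A (2*n) = (1+c)*(a + 2*(n : ℝ) + 1)/(4*(n : ℝ) + a + b + 2))
    (hAo : ∀ n : ℕ, A (2*n+1) = (1-c)*((2*(n : ℝ)+1) + a + b + 1)/(4*(n : ℝ) + 2 + a + b + 2))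
    (hCe : ∀ n : ℕ, Cs (2*n) = (1-c)*(2*(n : ℝ))/(4*(n : ℝ) + a + b))
    (hCo : ∀ n : ℕ, Cs (2*n+1) = (1+c)*((2*(n : ℝ)+1) + b)/(4*(n : ℝ) + 2 + a + b))
    (J : ℕ → Polynomial ℝ)
    (hJ0 : J 0 = 1)
    (hJ1 : Polynomial.X * J 0 = J 1 + Polynomial.C (1 - A 0 - Cs 0) * J 0)
    (hJrec : ∀ n : ℕ,
      Polynomial.X * J (n+1) = J (n+2) + Polynomial.C (1 - A (n+1) - Cs (n+1)) * J (n+1)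
        + Polynomial.C (A n * Cs (n+1)) * J n)
    (K : ℕ → Polynomial ℝ)
    (hK : ∀ n : ℕ, (Polynomial.X - 1) * K n = J (n+1) - Polynomial.C (A n) * J n) :
    (∀ n : ℕ, (K n).Monic ∧ (K n).natDegree = n) ∧
    (Polynomial.X * K 0 = K 1 + Polynomial.C (1 - A 0 - Cs 1) * K 0) ∧
    (∀ n : ℕ, Polynomial.X * K (n+1) =
      K (n+2) + Polynomial.C (1 - A (n+1) - Cs (n+2)) * K (n+1)
        + Polynomial.C (A (n+1) * Cs (n+1)) * K n) := by
  have hCs0 : Cs 0 = 0 := by simpa using hCe 0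
  -- J n is monic of degree n
  have hJP : ∀ n : ℕ, ((J n).Monic ∧ (J n).natDegree = n) ∧
      ((J (n+1)).Monic ∧ (J (n+1)).natDegree = n+1) := by
    intro n
    induction n with
    | zero =>
      have hJ1' : J 1 = Polynomial.X - Polynomial.C (1 - A 0 - Cs 0) := by
        have := hJ1
        rw [hJ0] at this
        linear_combination -this
      refine ⟨⟨by rw [hJ0]; exact Polynomial.monic_one, by simp [hJ0]⟩, ?_, ?_⟩
      · rw [hJ1']; exact Polynomial.monic_X_sub_C _
      · rw [hJ1']; exact Polynomial.natDegree_X_sub_C _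
    | succ n ih =>
      refine ⟨ih.2, ?_⟩
      have hrec : J (n+2) = Polynomial.X * J (n+1)
          - Polynomial.C (1 - A (n+1) - Cs (n+1)) * J (n+1)
          - Polynomial.C (A n * Cs (n+1)) * J n := by
        linear_combination -hJrec n
      have hXm : (Polynomial.X * J (n+1)).Monic := Polynomial.monic_X.mul ih.2.1
      have hXd : (Polynomial.X * J (n+1)).natDegree = n + 2 := by
        rw [Polynomial.monic_X.natDegree_mul ih.2.1, Polynomial.natDegree_X, ih.2.2]; omega
      have h1 := aux_monic_sub (n := n+1) (1 - A (n+1) - Cs (n+1)) hXm hXd (le_of_eq ih.2.2)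
      have h2 := aux_monic_sub (n := n+1) (A n * Cs (n+1)) h1.1 h1.2
        (by rw [ih.1.2]; omega)
      rw [hrec]; exact h2
  have hX1 : (Polynomial.X - 1 : Polynomial ℝ) = Polynomial.X - Polynomial.C 1 := by
    rw [Polynomial.C_1]
  have hKP : ∀ n : ℕ, (K n).Monic ∧ (K n).natDegree = n := by
    intro n
    have h := aux_monic_sub (n := n) (A n) (hJP n).2.1 (hJP n).2.2 (le_of_eq (hJP n).1.2)
    have hKm : (K n).Monic := by
      refine (Polynomial.monic_X_sub_C (1:ℝ)).of_mul_monic_left ?_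
      rw [← hX1, hK n]; exact h.1
    refine ⟨hKm, ?_⟩
    have := (Polynomial.monic_X_sub_C (1:ℝ)).natDegree_mul hKm
    rw [Polynomial.natDegree_X_sub_C, ← hX1, hK n, h.2] at this
    omega
  have hne : (Polynomial.X - 1 : Polynomial ℝ) ≠ 0 := by
    rw [hX1]; exact (Polynomial.monic_X_sub_C (1:ℝ)).ne_zero
  refine ⟨hKP, ?_, ?_⟩
  · apply mul_left_cancel₀ hne
    have e0 := hK 0
    have e1 := hK 1
    have r0 := hJ1
    have r1 := hJrec 0
    simp only [map_sub, map_mul, map_one, hCs0, map_zero, Nat.add_assoc, Nat.reduceAdd] at e0 e1 r0 r1 ⊢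
    linear_combination Polynomial.X * e0 - e1
      - (1 - Polynomial.C (A 0) - Polynomial.C (Cs 1)) * e0 + r1 - Polynomial.C (A 0) * r0
  · intro n
    apply mul_left_cancel₀ hne
    have e0 := hK n
    have e1 := hK (n+1)
    have e2 := hK (n+2)
    have r1 := hJrec n
    have r2 := hJrec (n+1)
    simp only [map_sub, map_mul, map_one, Nat.add_assoc, Nat.reduceAdd] at e0 e1 e2 r1 r2 ⊢
    linear_combination Polynomial.X * e1 - e2
      - (1 - Polynomial.C (A (n+1)) - Polynomial.C (Cs (n+2))) * e1
      - Polynomial.C (A (n+1)) * Polynomial.C (Cs (n+1)) * e0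
      + r2 - Polynomial.C (A (n+1)) * r1
end

section
/- With A_n, C_n the big -1 Jacobi recurrence coefficients, 1 - A_n - C_{n+1} = (-1)^{n+1} c and A_n C_n = f_n, where f_n = (1-c²)n(n+a+1)/((2n+a+b)(2n+a+b+2)) for n even and f_n = (1-c²)(n+b)(n+a+b+1)/((2n+a+b)(2n+a+b+2)) for n odd. -/
/-- `1 - A_n - C_{n+1} = (-1)^{n+1} c` and `A_n C_n = f_n` for the big `-1`
Jacobi recurrence coefficients. -/
theorem bigMinusOneJacobi_coefficient_identities
    (a b c : ℝ) (hc0 : 0 < c) (hc1 : c < 1)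
    (hden : ∀ n : ℕ, 2*(n : ℝ) + a + b ≠ 0)
    (A Cs f : ℕ → ℝ)
    (hAe : ∀ n : ℕ, A (2*n) = (1+c)*(a + 2*(n : ℝ) + 1)/(4*(n : ℝ) + a + b + 2))
    (hAo : ∀ n : ℕ, A (2*n+1) = (1-c)*((2*(n : ℝ)+1) + a + b + 1)/(4*(n : ℝ) + 2 + a + b + 2))
    (hCe : ∀ n : ℕ, Cs (2*n) = (1-c)*(2*(n : ℝ))/(4*(n : ℝ) + a + b))
    (hCo : ∀ n : ℕ, Cs (2*n+1) = (1+c)*((2*(n : ℝ)+1) + b)/(4*(n : ℝ) + 2 + a + b))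
    (hfe : ∀ n : ℕ, f (2*n) =
      (1-c^2)*(2*(n : ℝ))*(2*(n : ℝ) + a + 1)/((4*(n : ℝ) + a + b)*(4*(n : ℝ) + a + b + 2)))
    (hfo : ∀ n : ℕ, f (2*n+1) =
      (1-c^2)*((2*(n : ℝ)+1) + b)*((2*(n : ℝ)+1) + a + b + 1) /
        ((4*(n : ℝ) + 2 + a + b)*(4*(n : ℝ) + 2 + a + b + 2))) :
    ∀ n : ℕ, 1 - A n - Cs (n+1) = (-1 : ℝ)^(n+1) * c ∧ A n * Cs n = f n := by
  intro n
  rcases Nat.even_or_odd n with ⟨k, hk⟩ | ⟨k, hk⟩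
  · subst hk
    have e2 : k + k = 2*k := by ring
    rw [e2]
    have h1 := hden (2*k+1)
    have h2 := hden (2*k)
    push_cast at h1 h2
    have hd1 : (4*(k:ℝ) + a + b + 2) ≠ 0 := by intro h; apply h1; linarith
    have hd2 : (4*(k:ℝ) + 2 + a + b) ≠ 0 := by intro h; apply h1; linarith
    have hd3 : (4*(k:ℝ) + a + b) ≠ 0 := by intro h; apply h2; linarith
    constructor
    · rw [hAe k, show 2*k+1 = (2*k)+1 from rfl, hCo k]
      have he : (-1 : ℝ)^(2*k+1) = -1 := by
        rw [pow_succ, pow_mul]; norm_num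
      rw [he]
      rw [show (4*(k:ℝ) + 2 + a + b) = 4*(k:ℝ) + a + b + 2 by ring]
      rw [sub_sub, ← add_div, sub_eq_iff_eq_add', ← sub_eq_iff_eq_add, eq_comm, div_eq_iff hd1]
      ring
    · rw [hAe k, hCe k, hfe k]
      field_simp
      ring
  · subst hk
    have h1 := hden (2*k+1)
    have h2 := hden (2*k+2)
    push_cast at h1 h2
    have hd1 : (4*(k:ℝ) + 2 + a + b + 2) ≠ 0 := by intro h; apply h2; linarith
    have hd2 : (4*((k:ℝ) + 1) + a + b) ≠ 0 := by intro h; apply h2; linarith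
    have hd3 : (4*(k:ℝ) + 2 + a + b) ≠ 0 := by intro h; apply h1; linarith
    constructor
    · have he : (-1 : ℝ)^(2*k+1+1) = 1 := by
        rw [show 2*k+1+1 = 2*(k+1) from by ring, pow_mul]; norm_num
      rw [he, hAo k, show 2*k+1+1 = 2*(k+1) from by ring, hCe (k+1)]
      push_cast
      rw [show (4*((k:ℝ)+1) + a + b) = 4*(k:ℝ) + 2 + a + b + 2 by ring]
      rw [sub_sub, ← add_div, sub_eq_iff_eq_add', ← sub_eq_iff_eq_add, eq_comm, div_eq_iff hd1]
      ring
    · rw [hAo k, hCo k, hfo k]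
      field_simp
      ring
end

section
/- The generalized Hermite polynomials H_n^μ are eigenfunctions of the operator Ω^{(ε)} = -(1/2)∂_x² + (x - μ/x)∂_x + (μ/(2x²) + (ε-1)/2)(I - R), where R is the reflection Rf(x)=f(-x): for all x ≠ 0, Ω^{(ε)}H_n^μ(x) = λ_n^{(ε)} H_n^μ(x), with λ_{2n}^{(ε)} = 2n and λ_{2n+1}^{(ε)} = 2n + ε. -/
/-- Pochhammer symbol `(a)_k` over the reals. -/
noncomputable def poch (a : ℝ) (k : ℕ) : ℝ := (ascPochhammer ℝ k).eval a

/-- Terminating confluent hypergeometric sum `₁F₁(-n; b; z)`. -/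
noncomputable def hyp1F1 (n : ℕ) (b z : ℝ) : ℝ :=
  ∑ k ∈ Finset.range (n+1),
    poch (-(n : ℝ)) k / (poch b k * (Nat.factorial k : ℝ)) * z ^ k

/-- The coefficient of `z^k` in `₁F₁(-n; b; z)`. -/
noncomputable def gc (n : ℕ) (b : ℝ) (k : ℕ) : ℝ :=
  poch (-(n:ℝ)) k / (poch b k * (Nat.factorial k : ℝ))

lemma hyp1F1_eq (n : ℕ) (b z : ℝ) :
    hyp1F1 n b z = ∑ k ∈ Finset.range (n+1), gc n b k * z^k := rfl

lemma poch_succ (b : ℝ) (k : ℕ) : poch b (k+1) = poch b k * (b + k) := by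
  unfold poch; rw [ascPochhammer_succ_right]; simp

lemma poch_pos {b : ℝ} (hb : 0 < b) (k : ℕ) : 0 < poch b k := by
  induction k with
  | zero => simp [poch]
  | succ k ih =>
      rw [poch_succ]
      have : (0:ℝ) < b + k := by positivity
      exact mul_pos ih this

lemma gc_rec (n : ℕ) {b : ℝ} (hb : 0 < b) (k : ℕ) :
    gc n b (k+1) * (((k:ℝ)+1) * (b + k)) = gc n b k * ((k:ℝ) - n) := by
  unfold gc
  rw [poch_succ, poch_succ, Nat.factorial_succ]
  have h1 : poch b k ≠ 0 := (poch_pos hb k).ne'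
  have h2 : (b + k) ≠ 0 := by positivity
  have h3 : (Nat.factorial k : ℝ) ≠ 0 := Nat.cast_ne_zero.2 (Nat.factorial_ne_zero k)
  push_cast
  field_simp
  ring

lemma diffAt_polysum (s : Finset ℕ) (a : ℕ → ℝ) (m : ℕ → ℕ) (x : ℝ) :
    DifferentiableAt ℝ (fun x : ℝ => ∑ k ∈ s, a k * x ^ m k) x :=
  DifferentiableAt.fun_sum fun k _ => (differentiableAt_pow _).const_mul _

lemma deriv_polysum (s : Finset ℕ) (a : ℕ → ℝ) (m : ℕ → ℕ) (x : ℝ) :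
    deriv (fun x : ℝ => ∑ k ∈ s, a k * x ^ m k) x
      = ∑ k ∈ s, a k * ((m k : ℝ) * x ^ (m k - 1)) := by
  rw [deriv_fun_sum fun k _ => (differentiableAt_pow _).const_mul _]
  refine Finset.sum_congr rfl fun k _ => ?_
  rw [deriv_const_mul _ (differentiableAt_pow _), deriv_pow_field]

lemma even_key (m : ℕ) (μ x : ℝ) (hb : 0 < μ + 1/2) (hx : x ≠ 0) :
    -(1/2) * (∑ k ∈ Finset.range (m+1),
        (gc m (μ+1/2) k * ((2*k : ℕ) : ℝ)) * (((2*k-1 : ℕ) : ℝ) * x ^ (2*k-1-1)))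
      + (x - μ/x) * (∑ k ∈ Finset.range (m+1),
        (gc m (μ+1/2) k * ((2*k : ℕ) : ℝ)) * x ^ (2*k-1))
    = 2*(m:ℝ) * ∑ k ∈ Finset.range (m+1), gc m (μ+1/2) k * x ^ (2*k) := by
  rw [← sub_eq_zero, Finset.mul_sum, Finset.mul_sum, Finset.mul_sum,
    ← Finset.sum_add_distrib, ← Finset.sum_sub_distrib]
  set w : ℕ → ℝ := fun j => 2*((j:ℝ) - m) * gc m (μ+1/2) j * x^(2*j) with hw
  rw [Finset.sum_range_succ']
  have hterm : ∀ k ∈ Finset.range m,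
      -(1/2) * ((gc m (μ+1/2) (k+1) * ((2*(k+1) : ℕ) : ℝ)) * (((2*(k+1)-1 : ℕ) : ℝ) * x ^ (2*(k+1)-1-1)))
        + (x - μ/x) * ((gc m (μ+1/2) (k+1) * ((2*(k+1) : ℕ) : ℝ)) * x ^ (2*(k+1)-1))
        - 2*(m:ℝ) * (gc m (μ+1/2) (k+1) * x ^ (2*(k+1)))
      = w (k+1) - w k := by
    intro k _
    have e1 : 2*(k+1)-1 = 2*k+1 := by omega
    have e2 : 2*(k+1)-1-1 = 2*k := by omega
    have e3 : 2*(k+1) = 2*k+2 := by omega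
    rw [e2, e1, e3]
    have hdiv : (x - μ/x) * ((gc m (μ+1/2) (k+1) * ((2*k+2 : ℕ) : ℝ)) * x ^ (2*k+1))
        = (gc m (μ+1/2) (k+1) * ((2*k+2 : ℕ) : ℝ)) * (x ^ (2*k+2) - μ * x ^ (2*k)) := by
      field_simp
      ring
    rw [hdiv, hw]
    have hrec := gc_rec m hb k
    push_cast
    linear_combination (-2*x^(2*k)) * hrec
  rw [Finset.sum_congr rfl hterm, Finset.sum_range_sub w]
  simp [hw]

lemma odd_key (m : ℕ) (μ ε x : ℝ) (hb : 0 < μ + 3/2) (hx : x ≠ 0) :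
    -(1/2) * (∑ k ∈ Finset.range (m+1),
        (gc m (μ+3/2) k * ((2*k+1 : ℕ) : ℝ)) * (((2*k+1-1 : ℕ) : ℝ) * x ^ (2*k+1-1-1)))
      + (x - μ/x) * (∑ k ∈ Finset.range (m+1),
        (gc m (μ+3/2) k * ((2*k+1 : ℕ) : ℝ)) * x ^ (2*k+1-1))
      + (μ/(2*x^2) + (ε-1)/2) * (2 * ∑ k ∈ Finset.range (m+1), gc m (μ+3/2) k * x ^ (2*k+1))
    = (2*(m:ℝ)+ε) * ∑ k ∈ Finset.range (m+1), gc m (μ+3/2) k * x ^ (2*k+1) := by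
  rw [← sub_eq_zero, Finset.mul_sum, Finset.mul_sum, Finset.mul_sum, Finset.mul_sum,
    Finset.mul_sum, ← Finset.sum_add_distrib, ← Finset.sum_add_distrib, ← Finset.sum_sub_distrib]
  set w : ℕ → ℝ := fun j => 2*((j:ℝ) - m) * gc m (μ+3/2) j * x^(2*j+1) with hw
  rw [Finset.sum_range_succ']
  have hterm : ∀ k ∈ Finset.range m,
      -(1/2) * ((gc m (μ+3/2) (k+1) * ((2*(k+1)+1 : ℕ) : ℝ)) * (((2*(k+1)+1-1 : ℕ) : ℝ) * x ^ (2*(k+1)+1-1-1)))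
        + (x - μ/x) * ((gc m (μ+3/2) (k+1) * ((2*(k+1)+1 : ℕ) : ℝ)) * x ^ (2*(k+1)+1-1))
        + (μ/(2*x^2) + (ε-1)/2) * (2 * (gc m (μ+3/2) (k+1) * x ^ (2*(k+1)+1)))
        - (2*(m:ℝ)+ε) * (gc m (μ+3/2) (k+1) * x ^ (2*(k+1)+1))
      = w (k+1) - w k := by
    intro k _
    have e2 : 2*(k+1)+1-1-1 = 2*k+1 := by omega
    have e1 : 2*(k+1)+1-1 = 2*k+2 := by omega
    have e0 : 2*(k+1)+1 = 2*k+3 := by omega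
    rw [e2, e1, e0]
    have hdiv1 : (x - μ/x) * ((gc m (μ+3/2) (k+1) * ((2*k+3 : ℕ) : ℝ)) * x ^ (2*k+2))
        = (gc m (μ+3/2) (k+1) * ((2*k+3 : ℕ) : ℝ)) * (x ^ (2*k+3) - μ * x ^ (2*k+1)) := by
      field_simp
      ring
    have hdiv2 : (μ/(2*x^2) + (ε-1)/2) * (2 * (gc m (μ+3/2) (k+1) * x ^ (2*k+3)))
        = gc m (μ+3/2) (k+1) * (μ * x ^ (2*k+1) + (ε-1) * x ^ (2*k+3)) := by
      field_simp
      ring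
    rw [hdiv1, hdiv2, hw]
    have hrec := gc_rec m hb k
    push_cast
    linear_combination (-2*x^(2*k+1)) * hrec
  rw [Finset.sum_congr rfl hterm, Finset.sum_range_sub w]
  simp [hw]
  field_simp
  ring

/-- the generalized Hermite polynomials are eigenfunctions of
`Ω^{(ε)} = -(1/2)∂² + (x - μ/x)∂ + (μ/(2x²) + (ε-1)/2)(I - R)`. -/
theorem generalizedHermite_eigenvalue_equation
    (μ ε : ℝ) (hμ : μ > -1/2) (H : ℕ → ℝ → ℝ)
    (hEven : ∀ (n : ℕ) (x : ℝ),
      H (2*n) x = (-1 : ℝ)^n * poch (μ + 1/2) n * hyp1F1 n (μ + 1/2) (x^2))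
    (hOdd : ∀ (n : ℕ) (x : ℝ),
      H (2*n+1) x = (-1 : ℝ)^n * poch (μ + 3/2) n * x * hyp1F1 n (μ + 3/2) (x^2))
    (lam : ℕ → ℝ)
    (hle : ∀ n : ℕ, lam (2*n) = 2*(n : ℝ))
    (hlo : ∀ n : ℕ, lam (2*n+1) = 2*(n : ℝ) + ε) :
    ∀ (n : ℕ) (x : ℝ), x ≠ 0 →
      -(1/2) * deriv (deriv (H n)) x + (x - μ/x) * deriv (H n) x
        + (μ/(2*x^2) + (ε-1)/2) * (H n x - H n (-x)) = lam n * H n x := by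
  intro n x hx
  rcases Nat.even_or_odd n with ⟨m, hm⟩ | ⟨m, hm⟩
  · obtain rfl : n = 2*m := by omega
    have hb : (0:ℝ) < μ + 1/2 := by linarith
    set C : ℝ := (-1:ℝ)^m * poch (μ + 1/2) m with hC
    have hHfun : H (2*m) = fun y => C * ∑ k ∈ Finset.range (m+1), gc m (μ+1/2) k * y ^ (2*k) := by
      funext y
      rw [hEven, hyp1F1_eq]
      exact congrArg _ (Finset.sum_congr rfl fun k _ => by rw [pow_mul])
    have hD1 : deriv (H (2*m)) = fun y => C * ∑ k ∈ Finset.range (m+1),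
        (gc m (μ+1/2) k * ((2*k : ℕ) : ℝ)) * y ^ (2*k-1) := by
      funext y
      rw [hHfun, deriv_const_mul _ (diffAt_polysum _ _ _ _), deriv_polysum]
      exact congrArg _ (Finset.sum_congr rfl fun k _ => by ring)
    have hD2 : deriv (deriv (H (2*m))) x = C * ∑ k ∈ Finset.range (m+1),
        (gc m (μ+1/2) k * ((2*k : ℕ) : ℝ)) * (((2*k-1 : ℕ) : ℝ) * x ^ (2*k-1-1)) := by
      rw [hD1, deriv_const_mul _ (diffAt_polysum _ _ _ _), deriv_polysum]
    have hRefl : H (2*m) (-x) = H (2*m) x := by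
      rw [hHfun]
      exact congrArg _ (Finset.sum_congr rfl fun k _ => by
        rw [Even.neg_pow (even_two_mul k)])
    rw [hD2, hRefl, sub_self, mul_zero, add_zero, hle,
      show deriv (H (2*m)) x = C * ∑ k ∈ Finset.range (m+1),
        (gc m (μ+1/2) k * ((2*k : ℕ) : ℝ)) * x ^ (2*k-1) from congrFun hD1 x, hHfun]
    have hkey := even_key m μ x hb hx
    linear_combination C * hkey
  · obtain rfl : n = 2*m+1 := hm
    have hb : (0:ℝ) < μ + 3/2 := by linarith
    set C : ℝ := (-1:ℝ)^m * poch (μ + 3/2) m with hC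
    have hHfun : H (2*m+1) = fun y => C * ∑ k ∈ Finset.range (m+1), gc m (μ+3/2) k * y ^ (2*k+1) := by
      funext y
      rw [hOdd, hyp1F1_eq, Finset.mul_sum, Finset.mul_sum]
      refine Finset.sum_congr rfl fun k _ => ?_
      have hp : y ^ (2*k+1) = (y^2)^k * y := by rw [pow_succ, pow_mul]
      rw [hp]
      ring
    have hD1 : deriv (H (2*m+1)) = fun y => C * ∑ k ∈ Finset.range (m+1),
        (gc m (μ+3/2) k * ((2*k+1 : ℕ) : ℝ)) * y ^ (2*k+1-1) := by
      funext y
      rw [hHfun, deriv_const_mul _ (diffAt_polysum _ _ _ _), deriv_polysum]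
      exact congrArg _ (Finset.sum_congr rfl fun k _ => by ring)
    have hD2 : deriv (deriv (H (2*m+1))) x = C * ∑ k ∈ Finset.range (m+1),
        (gc m (μ+3/2) k * ((2*k+1 : ℕ) : ℝ)) * (((2*k+1-1 : ℕ) : ℝ) * x ^ (2*k+1-1-1)) := by
      rw [hD1, deriv_const_mul _ (diffAt_polysum _ _ _ _), deriv_polysum]
    have hRefl : H (2*m+1) (-x) = -H (2*m+1) x := by
      rw [hHfun]
      simp only [← Finset.sum_neg_distrib, ← mul_neg, ← neg_mul]
      refine congrArg _ (Finset.sum_congr rfl fun k _ => ?_)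
      rw [Odd.neg_pow ⟨k, by omega⟩]
    rw [hD2, hlo,
      show deriv (H (2*m+1)) x = C * ∑ k ∈ Finset.range (m+1),
        (gc m (μ+3/2) k * ((2*k+1 : ℕ) : ℝ)) * x ^ (2*k+1-1) from congrFun hD1 x,
      hRefl, hHfun]
    have hkey := odd_key m μ ε x hb hx
    linear_combination C * hkey
end

section
/- The polynomials Y_n(x; μ, γ), defined by Y_{2n}(x) = (-1)^n (μ+1/2)_n ₁F₁(-n; μ+1/2; x²-γ²) and Y_{2n+1}(x) = (-1)^n (μ+3/2)_n (x-γ) ₁F₁(-n; μ+3/2; x²-γ²), satisfy the recurrence x Y_n(x) = Y_{n+1}(x) + (-1)^n γ Y_n(x) + ϑ_n Y_{n-1}(x) with ϑ_{2n} = n, ϑ_{2n+1} = n + μ + 1/2, Y_{-1}=0, Y_0=1. -/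
lemma poch_zero (a : ℝ) : poch a 0 = 1 := by simp [poch]

lemma poch_succ_right (a : ℝ) (k : ℕ) : poch a (k+1) = poch a k * (a + k) := by
  simp [poch, ascPochhammer_succ_eval]

lemma poch_succ_left (a : ℝ) (k : ℕ) : poch a (k+1) = a * poch (a+1) k := by
  simp [poch, ascPochhammer_succ_left, Polynomial.eval_comp]

lemma poch_neg_self (m : ℕ) : poch (-(m : ℝ)) (m+1) = 0 := by
  rw [poch_succ_right]; ring

lemma hyp1F1_extend (m : ℕ) (b z : ℝ) :
    hyp1F1 m b z = ∑ k ∈ Finset.range (m+2),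
      poch (-(m : ℝ)) k / (poch b k * (Nat.factorial k : ℝ)) * z ^ k := by
  rw [hyp1F1, Finset.sum_range_succ (n := m+1), poch_neg_self]
  simp

lemma hyp_I1 (m : ℕ) (b z : ℝ) (hb : 0 < b) :
    b * (hyp1F1 m b z - hyp1F1 (m+1) b z) = z * hyp1F1 m (b+1) z := by
  have hbne : b ≠ 0 := ne_of_gt hb
  rw [hyp1F1_extend m b z]
  simp only [hyp1F1]
  push_cast
  rw [← Finset.sum_sub_distrib, Finset.mul_sum, Finset.mul_sum,
    Finset.sum_range_succ' _ (m+1)]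
  have h0 : b * (poch (-(m:ℝ)) 0 / (poch b 0 * (Nat.factorial 0 : ℝ)) * z ^ 0 -
      poch (-((m:ℝ)+1)) 0 / (poch b 0 * (Nat.factorial 0 : ℝ)) * z ^ 0) = 0 := by
    simp [poch_zero]
  rw [h0, add_zero]
  refine Finset.sum_congr rfl fun k hk => ?_
  have e1 : poch (-(m:ℝ)) (k+1) = poch (-(m:ℝ)) k * (-(m:ℝ)+k) := poch_succ_right _ _
  have e2 : poch (-((m:ℝ)+1)) (k+1) = (-((m:ℝ)+1)) * poch (-(m:ℝ)) k := by
    rw [poch_succ_left]; norm_num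
  have e3 : poch b (k+1) = b * poch (b+1) k := poch_succ_left _ _
  have hC : poch (b+1) k ≠ 0 := ne_of_gt (poch_pos (by linarith) k)
  have hf : ((k+1).factorial : ℝ) ≠ 0 := by positivity
  have hf' : ((k).factorial : ℝ) ≠ 0 := by positivity
  rw [e1, e2, e3, Nat.factorial_succ]
  push_cast
  field_simp
  ring

lemma hyp_I2 (m : ℕ) (b z : ℝ) (hb : 0 < b) :
    b * hyp1F1 (m+1) b z
      = (b + m + 1) * hyp1F1 (m+1) (b+1) z - ((m:ℝ)+1) * hyp1F1 m (b+1) z := by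
  have hbne : b ≠ 0 := ne_of_gt hb
  rw [hyp1F1_extend m (b+1) z]
  simp only [hyp1F1]
  push_cast
  rw [Finset.mul_sum, Finset.mul_sum, Finset.mul_sum, ← Finset.sum_sub_distrib]
  refine Finset.sum_congr rfl fun k hk => ?_
  have eA : poch b k * (b+k) = b * poch (b+1) k := by
    rw [← poch_succ_right, poch_succ_left]
  have eB : poch (-1 + -(m:ℝ)) k * ((-1 + -(m:ℝ))+k) = (-1 + -(m:ℝ)) * poch (-(m:ℝ)) k := by
    rw [show (-1 + -(m:ℝ)) = -((m:ℝ)+1) from by ring, ← poch_succ_right, poch_succ_left]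
    norm_num
  have hB : poch b k ≠ 0 := ne_of_gt (poch_pos hb k)
  have hC : poch (b+1) k ≠ 0 := ne_of_gt (poch_pos (by linarith) k)
  have hf : ((k).factorial : ℝ) ≠ 0 := by positivity
  field_simp
  rw [show -((m:ℝ)+1) = -1 + -(m:ℝ) by ring]
  linear_combination (z^k * poch (-1 + -(m:ℝ)) k) * eA.symm +
    (z^k * poch b k) * eB

/-- recurrence relation for the polynomials `Y_n(x; μ, γ)`. -/
theorem Y_polynomials_recurrence
    (μ γ : ℝ) (hμ : μ > -1/2) (Y : ℕ → ℝ → ℝ)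
    (hEven : ∀ (n : ℕ) (x : ℝ),
      Y (2*n) x = (-1 : ℝ)^n * poch (μ + 1/2) n * hyp1F1 n (μ + 1/2) (x^2 - γ^2))
    (hOdd : ∀ (n : ℕ) (x : ℝ),
      Y (2*n+1) x = (-1 : ℝ)^n * poch (μ + 3/2) n * (x - γ) * hyp1F1 n (μ + 3/2) (x^2 - γ^2))
    (θ : ℕ → ℝ)
    (hθe : ∀ n : ℕ, θ (2*n) = (n : ℝ))
    (hθo : ∀ n : ℕ, θ (2*n+1) = (n : ℝ) + μ + 1/2) :
    (∀ x : ℝ, Y 0 x = 1) ∧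
    (∀ x : ℝ, x * Y 0 x = Y 1 x + γ * Y 0 x) ∧
    (∀ (n : ℕ) (x : ℝ),
      x * Y (n+1) x = Y (n+2) x + (-1 : ℝ)^(n+1) * γ * Y (n+1) x + θ (n+1) * Y n x) := by
  have hb : (0:ℝ) < μ + 1/2 := by linarith
  have h32 : μ + 3/2 = μ + 1/2 + 1 := by ring
  have hY0 : ∀ x : ℝ, Y 0 x = 1 := by
    intro x
    have h := hEven 0 x
    norm_num [hyp1F1, poch_zero] at h
    exact h
  have hY1 : ∀ x : ℝ, Y 1 x = x - γ := by
    intro x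
    have h := hOdd 0 x
    norm_num [hyp1F1, poch_zero] at h
    exact h
  refine ⟨hY0, fun x => by rw [hY0, hY1]; ring, fun n x => ?_⟩
  rcases Nat.even_or_odd n with ⟨m, rfl⟩ | ⟨m, rfl⟩
  · -- n = m + m, even case
    rw [show m+m+1+1 = 2*(m+1) from by ring, show m+m+1 = 2*m+1 from by ring,
      show m+m = 2*m from by ring]
    rw [hOdd m x, hEven (m+1) x, hEven m x, hθo m, h32]
    rw [show ((-1:ℝ))^(2*m+1) = -1 from Odd.neg_one_pow ⟨m, by ring⟩]
    have hI1 := hyp_I1 m (μ + 1/2) (x^2 - γ^2) hb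
    have e1 : poch (μ+1/2) (m+1) = (μ+1/2) * poch (μ+1/2+1) m := poch_succ_left _ _
    have e2 : poch (μ+1/2) (m+1) = poch (μ+1/2) m * ((μ+1/2) + m) := poch_succ_right _ _
    linear_combination (-(-1:ℝ)^m * poch (μ+1/2+1) m) * hI1
      + ((-1:ℝ)^m * (hyp1F1 (m+1) (μ+1/2) (x^2-γ^2) - hyp1F1 m (μ+1/2) (x^2-γ^2))) * e1
      + ((-1:ℝ)^m * hyp1F1 m (μ+1/2) (x^2-γ^2)) * e2
  · -- n = 2m+1, odd case
    rw [show 2*m+1+1+1 = 2*(m+1)+1 from by ring, show 2*m+1+1 = 2*(m+1) from by ring]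
    rw [hEven (m+1) x, hOdd (m+1) x, hOdd m x, hθe (m+1), h32]
    rw [show ((-1:ℝ))^(2*(m+1)) = 1 from Even.neg_one_pow ⟨m+1, by ring⟩]
    have hI2 := hyp_I2 m (μ + 1/2) (x^2 - γ^2) hb
    have e1 : poch (μ+1/2) (m+1) = (μ+1/2) * poch (μ+1/2+1) m := poch_succ_left _ _
    have e2 : poch (μ+1/2+1) (m+1) = poch (μ+1/2+1) m * ((μ+1/2+1) + m) := poch_succ_right _ _
    push_cast
    linear_combination ((-1:ℝ)^(m+1) * (x-γ) * poch (μ+1/2+1) m) * hI2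
      + ((-1:ℝ)^(m+1) * (x-γ) * hyp1F1 (m+1) (μ+1/2) (x^2-γ^2)) * e1
      + (-((-1:ℝ)^(m+1)) * (x-γ) * hyp1F1 (m+1) (μ+1/2+1) (x^2-γ^2)) * e2
end
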